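/- Let H be a finite-dimensional complex inner product space and J : H → H a conjugate-linear bijective isometry (⟨Jx, Jy⟩ = ⟨y, x⟩ for all x, y ∈ H). Let C ⊆ B be unital complex subalgebras of End_ℂ(H) that are closed under adjoint, and suppose that B' = J B J⁻¹. Then the following are equivalent: (a) C' = J C J⁻¹; (b) C' ⊆ J B J⁻¹; (c) C = B. -/

import Mathlib

open scoped InnerProductSpace


private lemma proj_comm {E : Type} [NormedAddCommGroup E] [InnerProductSpace ℂ E]
    [FiniteDimensional ℂ E] (W : Submodule ℂ E) (M : E →ₗ[ℂ] E)
    (hM : ∀ w ∈ W, M w ∈ W) (hM' : ∀ w ∈ W, LinearMap.adjoint M w ∈ W) (v : E) :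
    (Submodule.orthogonalProjectionOnto W (M v) : E) = M (Submodule.orthogonalProjectionOnto W v) := by
  have hv : v - (Submodule.orthogonalProjectionOnto W v : E) ∈ Wᗮ := Submodule.sub_starProjection_mem_orthogonal v
  have h2 : M (v - (Submodule.orthogonalProjectionOnto W v : E)) ∈ Wᗮ := by
    rw [Submodule.mem_orthogonal]
    intro u hu
    rw [← LinearMap.adjoint_inner_left]
    exact (Submodule.mem_orthogonal _ _).mp hv _ (hM' u hu)
  have hsplit : M v = M (Submodule.orthogonalProjectionOnto W v : E) + M (v - (Submodule.orthogonalProjectionOnto W v : E)) := by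
    rw [← map_add]; congr 1; abel
  rw [hsplit, map_add, Submodule.coe_add,
    Submodule.orthogonalProjectionOnto_apply_of_mem_orthogonal h2,
    (Submodule.starProjection_apply W _).symm.trans
      (Submodule.starProjection_eq_self_iff.mpr (hM _ (Submodule.orthogonalProjectionOnto W v).2))]
  simp

private lemma bicomm {H : Type} [NormedAddCommGroup H] [InnerProductSpace ℂ H]
    [FiniteDimensional ℂ H] (C : Subalgebra ℂ (Module.End ℂ H))
    (hCstar : ∀ T, T ∈ C → LinearMap.adjoint T ∈ C) :
    ((Subalgebra.centralizer ℂ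
        ((Subalgebra.centralizer ℂ (C : Set (Module.End ℂ H))) : Set (Module.End ℂ H))
        : Subalgebra ℂ (Module.End ℂ H)) : Set (Module.End ℂ H)) ⊆ (C : Set (Module.End ℂ H)) := by
  intro T hT
  have hT' : ∀ F ∈ Subalgebra.centralizer ℂ (C : Set (Module.End ℂ H)),
      ∀ x, F (T x) = T (F x) := by
    intro F hF x
    have := (Subalgebra.mem_centralizer_iff ℂ).mp hT F hF
    exact congrFun (congrArg (fun g => g.toFun) this) x
  set n := Module.finrank ℂ H with hn
  let b : Module.Basis (Fin n) ℂ H := Module.finBasis ℂ H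
  let E := PiLp 2 (fun _ : Fin n => H)
  -- diagonal action
  let D : Module.End ℂ H → Module.End ℂ E := fun A =>
    { toFun := fun v => WithLp.toLp 2 (fun i => A (v i))
      map_add' := fun v w => PiLp.ext fun i => A.map_add (v i) (w i)
      map_smul' := fun c v => PiLp.ext fun i => A.map_smul c (v i) }
  have hD_adj : ∀ A : Module.End ℂ H, LinearMap.adjoint (D A) = D (LinearMap.adjoint A) := by
    intro A
    symm
    rw [LinearMap.eq_adjoint_iff]
    intro x y
    have hip : ∀ (u w : E), ⟪u, w⟫_ℂ = ∑ i, ⟪u i, w i⟫_ℂ := fun u w => PiLp.inner_apply u w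
    rw [hip, hip]
    exact Finset.sum_congr rfl fun i _ => LinearMap.adjoint_inner_left A (y i) (x i)
  -- evaluation on basis
  let Φ : Module.End ℂ H →ₗ[ℂ] E :=
    { toFun := fun S => WithLp.toLp 2 (fun i => S (b i))
      map_add' := fun S S' => PiLp.ext fun i => rfl
      map_smul' := fun c S => PiLp.ext fun i => rfl }
  let W : Submodule ℂ E := (Subalgebra.toSubmodule C).map Φ
  have hDΦ : ∀ (A S : Module.End ℂ H), D A (Φ S) = Φ (A * S) := fun A S => rfl
  have hWinv : ∀ A ∈ C, ∀ w ∈ W, D A w ∈ W := by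
    rintro A hA w ⟨S, hS, rfl⟩
    exact ⟨A * S, (Subalgebra.mem_toSubmodule C).mpr
      (mul_mem hA ((Subalgebra.mem_toSubmodule C).mp hS)), (hDΦ A S).symm⟩
  have hWinv' : ∀ A ∈ C, ∀ w ∈ W, LinearMap.adjoint (D A) w ∈ W := by
    intro A hA w hw
    rw [hD_adj]
    exact hWinv _ (hCstar A hA) w hw
  have hPcomm : ∀ A ∈ C, ∀ v : E,
      (Submodule.orthogonalProjectionOnto W (D A v) : E) = D A (Submodule.orthogonalProjectionOnto W v) :=
    fun A hA v => proj_comm W (D A) (hWinv A hA) (hWinv' A hA) v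
  -- single insertion
  let sgl : Fin n → H →ₗ[ℂ] E := fun j =>
    { toFun := fun x => WithLp.toLp 2 (fun k => if k = j then x else 0)
      map_add' := fun x y => PiLp.ext fun k => by
        show (if k = j then x + y else 0) = (if k = j then x else 0) + (if k = j then y else 0)
        by_cases h : k = j <;> simp [h]
      map_smul' := fun c x => PiLp.ext fun k => by
        show (if k = j then c • x else 0) = c • (if k = j then x else 0)
        by_cases h : k = j <;> simp [h] }
  have hsum : ∀ v : E, ∑ j, sgl j (v j) = v := by
    intro v
    ext k
    have : (∑ j, sgl j (v j)) k = ∑ j, (sgl j (v j)) k := by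
      rw [WithLp.ofLp_sum]; exact Finset.sum_apply k Finset.univ _
    rw [this]
    simp [sgl]
  let Pij : Fin n → Fin n → Module.End ℂ H := fun i j =>
    { toFun := fun x => (Submodule.orthogonalProjectionOnto W (sgl j x) : E) i
      map_add' := fun x y => by
        show (Submodule.orthogonalProjectionOnto W (sgl j (x + y)) : E) i
          = (Submodule.orthogonalProjectionOnto W (sgl j x) : E) i + (Submodule.orthogonalProjectionOnto W (sgl j y) : E) i
        rw [map_add, map_add, Submodule.coe_add]
        rfl
      map_smul' := fun c x => by
        show (Submodule.orthogonalProjectionOnto W (sgl j (c • x)) : E) i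
          = c • (Submodule.orthogonalProjectionOnto W (sgl j x) : E) i
        rw [map_smul, map_smul, Submodule.coe_smul]
        rfl }
  have hDsgl : ∀ (A : Module.End ℂ H) (j : Fin n) (x : H),
      D A (sgl j x) = sgl j (A x) := by
    intro A j x
    ext k
    by_cases h : k = j
    · show A ((sgl j x) k) = _
      simp [sgl, h]
    · show A ((sgl j x) k) = _
      simp [sgl, h]
  have hPij_mem : ∀ i j, Pij i j ∈ Subalgebra.centralizer ℂ (C : Set (Module.End ℂ H)) := by
    intro i j
    rw [Subalgebra.mem_centralizer_iff]
    intro A hA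
    apply LinearMap.ext
    intro x
    show A (Pij i j x) = Pij i j (A x)
    show D A (Submodule.orthogonalProjectionOnto W (sgl j x) : E) i = (Submodule.orthogonalProjectionOnto W (sgl j (A x)) : E) i
    rw [← hDsgl, hPcomm A hA]
  -- components of projection
  have hPapply : ∀ (v : E) (i : Fin n),
      (Submodule.orthogonalProjectionOnto W v : E) i = ∑ j, Pij i j (v j) := by
    intro v i
    conv_lhs => rw [← hsum v]
    rw [map_sum]
    have : ((∑ j, Submodule.orthogonalProjectionOnto W (sgl j (v j)) : W) : E)
        = ∑ j, (Submodule.orthogonalProjectionOnto W (sgl j (v j)) : E) := by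
      exact Submodule.coe_sum _ _ _
    rw [this, WithLp.ofLp_sum]
    exact Finset.sum_apply i Finset.univ _
  -- T commutes with projection
  have hPT : ∀ v : E, (Submodule.orthogonalProjectionOnto W (D T v) : E) = D T (Submodule.orthogonalProjectionOnto W v) := by
    intro v
    ext i
    show (Submodule.orthogonalProjectionOnto W (D T v) : E) i = T ((Submodule.orthogonalProjectionOnto W v : E) i)
    rw [hPapply, hPapply, map_sum]
    refine Finset.sum_congr rfl fun j _ => ?_
    show Pij i j (T (v j)) = T (Pij i j (v j))
    exact (hT' _ (hPij_mem i j) (v j))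
  -- conclude
  have he : Φ 1 ∈ W := ⟨1, one_mem C, rfl⟩
  have heq : (Submodule.orthogonalProjectionOnto W (Φ 1) : E) = Φ 1 := Submodule.starProjection_eq_self_iff.mpr he
  have hmem : D T (Φ 1) ∈ W := by
    rw [← heq, ← hPT]
    exact (Submodule.orthogonalProjectionOnto W (D T (Φ 1))).2
  obtain ⟨S, hS, hSeq⟩ := hmem
  have : T = S := by
    apply (Module.Basis.ext b fun i => ?_).symm
    have := congrFun (congrArg WithLp.ofLp hSeq) i
    show S (b i) = T (b i)
    exact this
  rw [this]
  exact hS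

/-- Lemma B: Let H be a finite-dimensional complex inner product space
and J a conjugate-linear bijective isometry. Let C ⊆ B be unital complex subalgebras
of End_ℂ(H) closed under adjoint with B' = J B J⁻¹.  Here the set
`{F | ∃ T ∈ S, ∀ x, F (J x) = J (T x)}` is exactly J S J⁻¹ (J being bijective).
Then (a) C' = J C J⁻¹, (b) C' ⊆ J B J⁻¹ and (c) C = B are equivalent. -/
theorem stmt_0 (H : Type) [NormedAddCommGroup H] [InnerProductSpace ℂ H]
    [FiniteDimensional ℂ H]
    (J : H → H) (hJbij : Function.Bijective J)
    (hJadd : ∀ x y, J (x + y) = J x + J y)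
    (hJsmul : ∀ (c : ℂ) (x : H), J (c • x) = (starRingEnd ℂ) c • J x)
    (hJinner : ∀ x y, ⟪J x, J y⟫_ℂ = ⟪y, x⟫_ℂ)
    (C B : Subalgebra ℂ (Module.End ℂ H))
    (hCB : C ≤ B)
    (hCstar : ∀ T, T ∈ C → LinearMap.adjoint T ∈ C)
    (hBstar : ∀ T, T ∈ B → LinearMap.adjoint T ∈ B)
    (hBcomm : (Subalgebra.centralizer ℂ (B : Set (Module.End ℂ H)) : Set (Module.End ℂ H))
      = { F : Module.End ℂ H | ∃ T ∈ B, ∀ x, F (J x) = J (T x) }) :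
    List.TFAE [
      (Subalgebra.centralizer ℂ (C : Set (Module.End ℂ H)) : Set (Module.End ℂ H))
        = { F : Module.End ℂ H | ∃ T ∈ C, ∀ x, F (J x) = J (T x) },
      (Subalgebra.centralizer ℂ (C : Set (Module.End ℂ H)) : Set (Module.End ℂ H))
        ⊆ { F : Module.End ℂ H | ∃ T ∈ B, ∀ x, F (J x) = J (T x) },
      C = B ] := by
  tfae_have 1 → 2 := by
    intro h1
    rw [h1]
    rintro F ⟨T, hT, hTF⟩
    exact ⟨T, hCB hT, hTF⟩
  tfae_have 3 → 1 := by
    intro h3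
    rw [h3]
    exact hBcomm
  tfae_have 2 → 3 := by
    intro h2
    -- C' ⊆ B'
    have hsub : (Subalgebra.centralizer ℂ (C : Set (Module.End ℂ H)) : Set (Module.End ℂ H))
        ⊆ (Subalgebra.centralizer ℂ (B : Set (Module.End ℂ H)) : Set (Module.End ℂ H)) := by
      rw [hBcomm]; exact h2
    -- B ⊆ C''
    have hB : (B : Set (Module.End ℂ H)) ⊆
        ((Subalgebra.centralizer ℂ
          ((Subalgebra.centralizer ℂ (C : Set (Module.End ℂ H))) : Set (Module.End ℂ H))
          : Subalgebra ℂ (Module.End ℂ H)) : Set (Module.End ℂ H)) := by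
      intro x hx
      rw [SetLike.mem_coe, Subalgebra.mem_centralizer_iff]
      intro g hg
      have hg' : g ∈ Subalgebra.centralizer ℂ (B : Set (Module.End ℂ H)) := hsub hg
      exact ((Subalgebra.mem_centralizer_iff ℂ).mp hg' x hx).symm
    have hCC := bicomm C hCstar
    have : (B : Set (Module.End ℂ H)) ⊆ (C : Set (Module.End ℂ H)) := fun x hx => hCC (hB hx)
    exact le_antisymm hCB this
  tfae_finish
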